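/- Let d : V → ℕ be the degree function of a simple planar graph on a finite vertex set with n′ = |V′| ≥ 1 vertices in V′ = V ∖ {s,t}, and suppose ∑_{v∈V′} d(v) ≤ 6n′. Then ∏_{v∈V′} (1 − 2^{1−d(v)}) ≤ (31/32)^{n′}. -/

import Mathlib

/-- If `d : V′ → ℕ` with `d(v) ≥ 1` for all `v` and `∑ d(v) ≤ 6·|V′|` on a nonempty
finite set `V′`, then `∏_{v ∈ V′} (1 − 2^{1−d(v)}) ≤ (31/32)^{|V′|}`. -/
theorem prod_one_sub_two_pow_le
    {V' : Type*} [Fintype V'] [Nonempty V']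
    (d : V' → ℕ) (hd : ∀ v, 1 ≤ d v)
    (hsum : ∑ v : V', d v ≤ 6 * Fintype.card V') :
    ∏ v : V', (1 - (2 : ℝ) ^ ((1 : ℤ) - (d v : ℤ))) ≤
      (31 / 32 : ℝ) ^ (Fintype.card V') := by
  classical
  set n := Fintype.card V' with hn
  have hn0 : 0 < n := Fintype.card_pos
  have hnR : (0:ℝ) < n := by exact_mod_cast hn0
  have hw1 : ∑ _v : V', (n:ℝ)⁻¹ = 1 := by
    field_simp
    rw [Finset.sum_const, Finset.card_univ, ← hn, nsmul_eq_mul]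
    exact mul_one_div_cancel hnR.ne'
  set a : V' → ℝ := fun v => 1 - (2:ℝ) ^ ((1:ℤ) - (d v : ℤ)) with ha
  have ha0 : ∀ v, 0 ≤ a v := by
    intro v
    have : (2:ℝ) ^ ((1:ℤ) - (d v : ℤ)) ≤ 1 := by
      apply zpow_le_one_of_nonpos₀ (by norm_num)
      have := hd v
      omega
    simp only [ha]; linarith
  -- Step 1: lower bound on B := ∑ (1/n) 2^{-d v}
  have hB : (1/64 : ℝ) ≤ ∑ v : V', (n:ℝ)⁻¹ * (2:ℝ) ^ (-(d v : ℤ)) := by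
    have hgeo := Real.geom_mean_le_arith_mean_weighted Finset.univ
      (fun _ => (n:ℝ)⁻¹) (fun v => (2:ℝ) ^ (-(d v : ℤ)))
      (fun i _ => by positivity) hw1 (fun i _ => by positivity)
    refine le_trans ?_ hgeo
    have heq : ∀ v : V', ((2:ℝ) ^ (-(d v : ℤ))) ^ ((n:ℝ)⁻¹)
        = (2:ℝ) ^ ((-(d v : ℤ) : ℝ) * (n:ℝ)⁻¹) := by
      intro v
      rw [← Real.rpow_intCast 2 (-(d v : ℤ)), ← Real.rpow_mul (by norm_num)]
      push_cast
      ring_nf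
    have hsR : (∑ v : V', (d v : ℝ)) ≤ 6 * n := by exact_mod_cast hsum
    calc (1/64 : ℝ) = (2:ℝ) ^ (-6 : ℝ) := by
          rw [show (-6:ℝ) = ((-6:ℤ):ℝ) by norm_num, Real.rpow_intCast]; norm_num
      _ ≤ (2:ℝ) ^ ((∑ v : V', ((-(d v : ℤ) : ℝ) * (n:ℝ)⁻¹))) := by
          apply Real.rpow_le_rpow_left_iff (x := 2) (by norm_num) |>.mpr
          have : (∑ v : V', ((-(d v : ℤ) : ℝ) * (n:ℝ)⁻¹))
              = -((∑ v : V', (d v : ℝ)) * (n:ℝ)⁻¹) := by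
            rw [← Finset.sum_mul, ← neg_mul, ← Finset.sum_neg_distrib]
            push_cast
            ring_nf
          rw [this]
          have h6 : (∑ v : V', (d v : ℝ)) * (n:ℝ)⁻¹ ≤ 6 := by
            rw [mul_inv_le_iff₀ hnR]
            linarith
          linarith
      _ = ∏ v : V', ((2:ℝ) ^ (-(d v : ℤ))) ^ ((n:ℝ)⁻¹) := by
          rw [Real.rpow_sum_of_pos (by norm_num)]
          exact Finset.prod_congr rfl fun v _ => (heq v).symm
  -- Step 2: AM-GM on a
  have hA0 : (0:ℝ) ≤ ∑ v : V', (n:ℝ)⁻¹ * a v :=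
    Finset.sum_nonneg fun v _ => mul_nonneg (by positivity) (ha0 v)
  have hgeo2 := Real.geom_mean_le_arith_mean_weighted Finset.univ
      (fun _ => (n:ℝ)⁻¹) a (fun i _ => by positivity) hw1 (fun i _ => ha0 i)
  have hprod : ∏ v : V', a v ≤ (∑ v : V', (n:ℝ)⁻¹ * a v) ^ n := by
    have h1 : ∏ v : V', a v = (∏ v : V', (a v) ^ ((n:ℝ)⁻¹)) ^ (n:ℕ) := by
      rw [← Finset.prod_pow]
      refine Finset.prod_congr rfl fun v _ => ?_
      rw [← Real.rpow_natCast ((a v) ^ ((n:ℝ)⁻¹)) n, ← Real.rpow_mul (ha0 v),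
        inv_mul_cancel₀ (ne_of_gt hnR), Real.rpow_one]
    rw [h1]
    exact pow_le_pow_left₀ (Finset.prod_nonneg fun v _ => Real.rpow_nonneg (ha0 v) _) hgeo2 n
  -- Step 3: the average is at most 31/32
  have havg : ∑ v : V', (n:ℝ)⁻¹ * a v ≤ 31/32 := by
    have hsplit : ∀ v : V', (n:ℝ)⁻¹ * a v
        = (n:ℝ)⁻¹ - 2 * ((n:ℝ)⁻¹ * (2:ℝ) ^ (-(d v : ℤ))) := by
      intro v
      have : (2:ℝ) ^ ((1:ℤ) - (d v : ℤ)) = 2 * (2:ℝ) ^ (-(d v : ℤ)) := by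
        rw [zpow_sub₀ (by norm_num : (2:ℝ) ≠ 0)]
        simp [zpow_neg]
        ring
      simp only [ha, this]
      ring
    rw [Finset.sum_congr rfl fun v _ => hsplit v, Finset.sum_sub_distrib,
      ← Finset.mul_sum, hw1]
    linarith
  calc ∏ v : V', a v ≤ (∑ v : V', (n:ℝ)⁻¹ * a v) ^ n := hprod
    _ ≤ (31/32:ℝ) ^ n := pow_le_pow_left₀ hA0 havg n
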